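/- Let A be a d×d real symmetric positive semidefinite matrix and B a d×d real symmetric positive definite matrix, and let X ∈ ℝ^{d×t} have rank t. Then tr(X^T A X (X^T B X)^{-1}) ≤ Σ_{i=1}^t λ_i(B^{-1}A), where λ_1(B^{-1}A) ≥ ... ≥ λ_d(B^{-1}A) are the eigenvalues of B^{-1}A in decreasing order. -/

import Mathlib

open Matrix Polynomial

lemma my_map_mul_inv {n : Type*} [DecidableEq n] [Fintype n] {R : Type*} [CommRing R]
    (P : Matrix n n R) (h : IsUnit P.det) :
    P.map (C : R →+* R[X]) * P⁻¹.map (C : R → R[X]) = 1 := by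
  rw [← Matrix.map_mul, mul_nonsing_inv P h]
  simp

lemma my_charpoly_conj {n : Type*} [DecidableEq n] [Fintype n] {R : Type*} [CommRing R]
    (P M : Matrix n n R) (h : IsUnit P.det) :
    (P * M * P⁻¹).charpoly = M.charpoly := by
  have hmap := my_map_mul_inv P h
  have key : charmatrix (P * M * P⁻¹) =
      P.map C * charmatrix M * P⁻¹.map C := by
    simp only [charmatrix, Matrix.sub_mul, Matrix.mul_sub]
    congr 1
    · -- P.map C * scalar X * P⁻¹.map C = scalar X
      rw [scalar_apply, ← smul_one_eq_diagonal, Matrix.mul_smul, Matrix.mul_one,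
        Matrix.smul_mul, hmap]
    · show (RingHom.mapMatrix C) (P * M * P⁻¹) = _
      simp only [RingHom.mapMatrix_apply, Matrix.map_mul]
  rw [Matrix.charpoly, key, Matrix.det_mul, Matrix.det_mul, mul_comm, ← mul_assoc, mul_comm (P⁻¹.map C).det, ← Matrix.det_mul, hmap, Matrix.det_one, one_mul]
  rfl

lemma my_charpoly_diagonal {n : Type*} [DecidableEq n] [Fintype n] [LinearOrder n]
    {R : Type*} [CommRing R] (v : n → R) :
    (diagonal v).charpoly = ∏ i, (X - C (v i)) := by
  rw [Matrix.charpoly_of_upperTriangular _ (Matrix.blockTriangular_diagonal v)]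
  simp

lemma my_roots_prod {d : ℕ} (f : Fin d → ℝ) :
    (∏ i : Fin d, (X - C (f i))).roots = Finset.univ.val.map f := by
  have : (∏ i : Fin d, (X - C (f i))) =
      ((Finset.univ.val.map f).map (fun a => X - C a)).prod := by
    rw [Finset.prod, Multiset.map_map]
    rfl
  rw [this, Polynomial.roots_multiset_prod_X_sub_C]

lemma my_sum_comp {d : ℕ} (f g : Fin d → ℝ) (h : Finset.univ.val.map f = Finset.univ.val.map g)
    (φ : ℝ → ℝ) : ∑ i, φ (f i) = ∑ i, φ (g i) := by
  have h1 : ∑ i, φ (f i) = ((Finset.univ.val.map f).map φ).sum := by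
    rw [Finset.sum, Multiset.map_map]; rfl
  have h2 : ∑ i, φ (g i) = ((Finset.univ.val.map g).map φ).sum := by
    rw [Finset.sum, Multiset.map_map]; rfl
  rw [h1, h2, h]

lemma my_card_filter {d t : ℕ} (h : t ≤ d) :
    (Finset.univ.filter fun i : Fin d => (i : ℕ) < t).card = t := by
  have : Finset.image (Fin.val) (Finset.univ.filter fun i : Fin d => (i : ℕ) < t)
      = Finset.range t := by
    ext n
    simp only [Finset.mem_image, Finset.mem_filter, Finset.mem_univ, true_and, Finset.mem_range]
    constructor
    · rintro ⟨i, hi, rfl⟩; exact hi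
    · intro hn; exact ⟨⟨n, lt_of_lt_of_le hn h⟩, hn, rfl⟩
  have hinj : Set.InjOn Fin.val ((Finset.univ.filter fun i : Fin d => (i : ℕ) < t) : Set (Fin d)) :=
    fun a _ b _ hab => Fin.ext hab
  rw [← Finset.card_image_of_injOn hinj, this, Finset.card_range]

lemma my_key {d t : ℕ} (lam mu c : Fin d → ℝ) (hlam : Antitone lam)
    (hlam0 : ∀ i, 0 ≤ lam i) (htd : t ≤ d)
    (hms : Finset.univ.val.map mu = Finset.univ.val.map lam)
    (hc0 : ∀ i, 0 ≤ c i) (hc1 : ∀ i, c i ≤ 1) (hsum : ∑ i, c i = t) :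
    ∑ i, mu i * c i ≤ ∑ i ∈ Finset.univ.filter (fun i : Fin d => (i : ℕ) < t), lam i := by
  classical
  set L : ℝ := if h : t < d then lam ⟨t, h⟩ else 0 with hL
  have hL0 : 0 ≤ L := by
    rw [hL]; split
    · exact hlam0 _
    · exact le_refl 0
  have step1 : ∀ i, mu i * c i ≤ L * c i + max (mu i - L) 0 := by
    intro i
    rcases le_or_gt (mu i) L with h | h
    · calc mu i * c i ≤ L * c i := mul_le_mul_of_nonneg_right h (hc0 i)
        _ ≤ L * c i + max (mu i - L) 0 := le_add_of_nonneg_right (le_max_right _ 0)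
    · rw [max_eq_left (by linarith : (0:ℝ) ≤ mu i - L)]
      have h2 : (mu i - L) * c i ≤ (mu i - L) * 1 :=
        mul_le_mul_of_nonneg_left (hc1 i) (by linarith)
      nlinarith
  have step2 : ∑ i, max (mu i - L) 0 = ∑ i, max (lam i - L) 0 :=
    my_sum_comp mu lam hms (fun x => max (x - L) 0)
  have step3 : ∑ i, max (lam i - L) 0
      = ∑ i ∈ Finset.univ.filter (fun i : Fin d => (i : ℕ) < t), (lam i - L) := by
    rw [← Finset.sum_filter_add_sum_filter_not Finset.univ (fun i : Fin d => (i : ℕ) < t)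
      (fun i => max (lam i - L) 0)]
    have e1 : ∀ i ∈ Finset.univ.filter (fun i : Fin d => (i : ℕ) < t),
        max (lam i - L) 0 = lam i - L := by
      intro i hi
      rw [Finset.mem_filter] at hi
      apply max_eq_left
      rw [hL]
      split
      · rename_i hd
        have : i ≤ (⟨t, hd⟩ : Fin d) := by
          rw [Fin.le_def]; exact le_of_lt hi.2
        have := hlam this
        linarith
      · have := hlam0 i; linarith
    have e2 : ∀ i ∈ Finset.univ.filter (fun i : Fin d => ¬ ((i : ℕ) < t)),
        max (lam i - L) 0 = 0 := by
      intro i hi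
      rw [Finset.mem_filter] at hi
      have hti : t ≤ (i : ℕ) := le_of_not_gt hi.2
      have htd' : t < d := lt_of_le_of_lt hti i.2
      apply max_eq_right
      rw [hL, dif_pos htd']
      have : (⟨t, htd'⟩ : Fin d) ≤ i := by rw [Fin.le_def]; exact hti
      have := hlam this
      linarith
    rw [Finset.sum_congr rfl e1, Finset.sum_congr rfl e2, Finset.sum_const_zero, add_zero]
  have hcard := my_card_filter (d := d) htd
  calc ∑ i, mu i * c i ≤ ∑ i, (L * c i + max (mu i - L) 0) := Finset.sum_le_sum fun i _ => step1 i
    _ = L * (t : ℝ) + ∑ i ∈ Finset.univ.filter (fun i : Fin d => (i : ℕ) < t), (lam i - L) := by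
        rw [Finset.sum_add_distrib, ← Finset.mul_sum, hsum, step2, step3]
    _ = ∑ i ∈ Finset.univ.filter (fun i : Fin d => (i : ℕ) < t), lam i := by
        rw [Finset.sum_sub_distrib, Finset.sum_const, hcard, nsmul_eq_mul]
        ring

lemma my_mulVec_inj {d t : ℕ} (X : Matrix (Fin d) (Fin t) ℝ) (hX : X.rank = t) :
    ∀ v : Fin t → ℝ, X *ᵥ v = 0 → v = 0 := by
  have hrn := LinearMap.finrank_range_add_finrank_ker X.mulVecLin
  rw [show Module.finrank ℝ (LinearMap.range X.mulVecLin) = t from hX,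
    Module.finrank_pi, Fintype.card_fin] at hrn
  have hker : LinearMap.ker X.mulVecLin = ⊥ := by
    rw [← Submodule.finrank_eq_zero (R := ℝ)]
    omega
  intro v hv
  have : v ∈ LinearMap.ker X.mulVecLin := by
    simpa [Matrix.mulVecLin_apply] using hv
  rwa [hker, Submodule.mem_bot] at this

lemma my_posDef_conj {d t : ℕ} (B : Matrix (Fin d) (Fin d) ℝ) (X : Matrix (Fin d) (Fin t) ℝ)
    (hB : B.PosDef) (hinj : ∀ v : Fin t → ℝ, X *ᵥ v = 0 → v = 0) :
    (Xᵀ * B * X).PosDef := by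
  refine Matrix.PosDef.of_dotProduct_mulVec_pos ?_ ?_
  · show (Xᵀ * B * X)ᴴ = _
    rw [conjTranspose_eq_transpose_of_trivial, Matrix.transpose_mul, Matrix.transpose_mul,
      Matrix.transpose_transpose]
    have hBt : Bᵀ = B := by
      have := hB.1
      rwa [Matrix.IsHermitian, conjTranspose_eq_transpose_of_trivial] at this
    rw [hBt, Matrix.mul_assoc]
  · intro x hx
    have hXx : X *ᵥ x ≠ 0 := fun h => hx (hinj x h)
    have : star x ⬝ᵥ (Xᵀ * B * X) *ᵥ x = star (X *ᵥ x) ⬝ᵥ B *ᵥ (X *ᵥ x) := by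
      rw [← Matrix.mulVec_mulVec, ← Matrix.mulVec_mulVec, Matrix.dotProduct_mulVec,
        star_trivial, star_trivial, Matrix.vecMul_transpose]
    rw [this]
    exact hB.dotProduct_mulVec_pos hXx

lemma my_trace_diag {d : ℕ} (v : Fin d → ℝ) (Q : Matrix (Fin d) (Fin d) ℝ) :
    (Matrix.diagonal v * Q).trace = ∑ i, v i * Q i i := by
  simp [Matrix.trace, Matrix.diag, Matrix.mul_apply, Matrix.diagonal_apply]

open scoped MatrixOrder in
lemma my_sqrt {d : ℕ} (B : Matrix (Fin d) (Fin d) ℝ) (hB : B.PosSemidef) :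
    ∃ S : Matrix (Fin d) (Fin d) ℝ, S * S = B ∧ Sᴴ = S ∧ S.PosSemidef :=
  ⟨CFC.sqrt B, CFC.sqrt_mul_sqrt_self B hB.nonneg, (CFC.sqrt_nonneg B).posSemidef.1,
    (CFC.sqrt_nonneg B).posSemidef⟩

/-- Upper trace bound: for `A` PSD, `B` PD and `X` of full column rank `t`,
`tr(Xᵀ A X (Xᵀ B X)⁻¹) ≤ Σ_{i=1}^t λ_i(B⁻¹A)`, where `lam` lists the eigenvalues of
`B⁻¹ A` (with multiplicity, via the characteristic polynomial) in decreasing order. -/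
theorem trace_ratio_upper_bound {d t : ℕ} (A B : Matrix (Fin d) (Fin d) ℝ)
    (X : Matrix (Fin d) (Fin t) ℝ)
    (hA : A.PosSemidef) (hB : B.PosDef) (hX : X.rank = t)
    (lam : Fin d → ℝ) (hlam : Antitone lam)
    (hchar : (B⁻¹ * A).charpoly
      = ∏ i : Fin d, (Polynomial.X - Polynomial.C (lam i))) :
    (Xᵀ * A * X * (Xᵀ * B * X)⁻¹).trace
      ≤ ∑ i ∈ Finset.univ.filter (fun i : Fin d => (i : ℕ) < t), lam i := by
  -- basic setup
  have htd : t ≤ d := by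
    have h1 := X.rank_le_card_height
    rw [hX, Fintype.card_fin] at h1
    exact h1
  obtain ⟨S, hSS, hSH⟩ : ∃ S : Matrix (Fin d) (Fin d) ℝ,
      S * S = B ∧ Sᴴ = S ∧ S.PosSemidef :=
    my_sqrt B hB.posSemidef
  obtain ⟨hSH, hSpsd⟩ := hSH
  have hST : Sᵀ = S := by rwa [conjTranspose_eq_transpose_of_trivial] at hSH
  have hdetS : IsUnit S.det := by
    rw [isUnit_iff_ne_zero]
    intro h
    have : B.det = 0 := by rw [← hSS, Matrix.det_mul, h, mul_zero]
    exact hB.det_pos.ne' this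
  have hdetSinv : IsUnit S⁻¹.det := S.isUnit_nonsing_inv_det hdetS
  have hSinvH : S⁻¹ᴴ = S⁻¹ := by rw [Matrix.conjTranspose_nonsing_inv, hSH]
  have hSinvT : S⁻¹ᵀ = S⁻¹ := by rw [Matrix.transpose_nonsing_inv, hST]
  have hMpsd : (S⁻¹ * A * S⁻¹).PosSemidef := by
    have := hA.mul_mul_conjTranspose_same S⁻¹
    rwa [hSinvH] at this
  set M := S⁻¹ * A * S⁻¹ with hMdef
  have hMH : M.IsHermitian := hMpsd.1
  -- eigen-decomposition of M
  obtain ⟨μ, hμ0, U, hU1, hU2, hspec⟩ : ∃ μ : Fin d → ℝ, (∀ i, 0 ≤ μ i) ∧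
      ∃ U : Matrix (Fin d) (Fin d) ℝ, star U * U = 1 ∧ U * star U = 1 ∧
        M = U * Matrix.diagonal μ * star U := by
    refine ⟨hMH.eigenvalues, hMpsd.eigenvalues_nonneg, hMH.eigenvectorUnitary,
      Matrix.mem_unitaryGroup_iff'.mp (IsHermitian.eigenvectorUnitary hMH).2,
      Matrix.mem_unitaryGroup_iff.mp (IsHermitian.eigenvectorUnitary hMH).2, ?_⟩
    have := hMH.spectral_theorem
    rwa [RCLike.ofReal_real_eq_id, Function.id_comp] at this
  have hUinv : U⁻¹ = star U := Matrix.inv_eq_right_inv hU2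
  have hdetU : IsUnit U.det := Matrix.isUnit_det_of_right_inverse hU2
  have hUT : star U = Uᵀ := by
    rw [Matrix.star_eq_conjTranspose, conjTranspose_eq_transpose_of_trivial]
  have hcharM : M.charpoly = ∏ i : Fin d, (Polynomial.X - Polynomial.C (μ i)) := by
    rw [show M = U * Matrix.diagonal μ * U⁻¹ by rw [hUinv]; exact hspec]
    rw [my_charpoly_conj U _ hdetU, my_charpoly_diagonal]
  have hcharB : (B⁻¹ * A).charpoly = M.charpoly := by
    have hBinv : B⁻¹ = S⁻¹ * S⁻¹ := by rw [← hSS, Matrix.mul_inv_rev]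
    have heq : B⁻¹ * A = S⁻¹ * M * S⁻¹⁻¹ := by
      rw [Matrix.nonsing_inv_nonsing_inv S hdetS, hMdef, hBinv]
      simp only [Matrix.mul_assoc]
      rw [Matrix.nonsing_inv_mul S hdetS, Matrix.mul_one]
    rw [heq, my_charpoly_conj _ _ hdetSinv]
  -- multiset equality of lam and μ
  have hms : Finset.univ.val.map lam = Finset.univ.val.map μ := by
    have h2 := hchar.symm.trans (hcharB.trans hcharM)
    rw [← my_roots_prod lam, ← my_roots_prod μ, h2]
  have hlam0 : ∀ i, 0 ≤ lam i := by
    intro i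
    have hmem : lam i ∈ Finset.univ.val.map μ := by
      rw [← hms]
      exact Multiset.mem_map_of_mem lam (Finset.mem_univ i)
    obtain ⟨j, _, hj⟩ := Multiset.mem_map.mp hmem
    rw [← hj]
    exact hμ0 j
  -- the projection
  have hW : (Xᵀ * B * X).PosDef := my_posDef_conj B X hB (my_mulVec_inj X hX)
  set W := Xᵀ * B * X with hWdef
  have hdetW : IsUnit W.det := isUnit_iff_ne_zero.mpr hW.det_pos.ne'
  have hWT : Wᵀ = W := by
    have := hW.1; rwa [Matrix.IsHermitian, conjTranspose_eq_transpose_of_trivial] at this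
  have hWinvT : W⁻¹ᵀ = W⁻¹ := by rw [Matrix.transpose_nonsing_inv, hWT]
  obtain ⟨Y, hYdef⟩ : ∃ Y : Matrix (Fin d) (Fin t) ℝ, Y = S * X := ⟨S * X, rfl⟩
  have hYW : Yᵀ * Y = W := by
    rw [hYdef, Matrix.transpose_mul, hST, hWdef, ← hSS]
    simp only [Matrix.mul_assoc]
  have hXAX : Xᵀ * A * X = Yᵀ * M * Y := by
    rw [hYdef, Matrix.transpose_mul, hST, hMdef]
    simp only [Matrix.mul_assoc]
    rw [Matrix.mul_nonsing_inv_cancel_left S _ hdetS, Matrix.nonsing_inv_mul_cancel_left S _ hdetS]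
  obtain ⟨P, hPdef⟩ : ∃ P : Matrix (Fin d) (Fin d) ℝ, P = Y * W⁻¹ * Yᵀ := ⟨_, rfl⟩
  have hPT : Pᵀ = P := by
    rw [hPdef, Matrix.transpose_mul, Matrix.transpose_mul, Matrix.transpose_transpose,
      hWinvT, Matrix.mul_assoc]
  have hPP : P * P = P := by
    rw [hPdef]
    calc Y * W⁻¹ * Yᵀ * (Y * W⁻¹ * Yᵀ) = Y * W⁻¹ * (Yᵀ * Y) * W⁻¹ * Yᵀ := by
          simp only [Matrix.mul_assoc]
      _ = Y * W⁻¹ * Yᵀ := by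
          rw [hYW, Matrix.nonsing_inv_mul_cancel_right W Y hdetW]
  have htrP : P.trace = (t : ℝ) := by
    rw [hPdef, Matrix.trace_mul_cycle, hYW, Matrix.mul_nonsing_inv W hdetW, Matrix.trace_one]
    simp
  obtain ⟨Q, hQdef⟩ : ∃ Q : Matrix (Fin d) (Fin d) ℝ, Q = star U * P * U := ⟨_, rfl⟩
  have hQT : Qᵀ = Q := by
    rw [hQdef, hUT, Matrix.transpose_mul, Matrix.transpose_mul, Matrix.transpose_transpose,
      hPT, Matrix.mul_assoc]
  have hQQ : Q * Q = Q := by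
    rw [hQdef]
    calc (star U * P * U) * (star U * P * U)
        = star U * (P * ((U * star U) * (P * U))) := by simp only [Matrix.mul_assoc]
      _ = star U * (P * (P * U)) := by rw [hU2, Matrix.one_mul]
      _ = star U * (P * U) := by rw [← Matrix.mul_assoc P P U, hPP]
      _ = star U * P * U := by rw [Matrix.mul_assoc]
  have htrQ : Q.trace = (t : ℝ) := by
    rw [hQdef, Matrix.trace_mul_cycle, hU2, Matrix.one_mul, htrP]
  have hsym : ∀ i j, Q j i = Q i j := by
    intro i j
    conv_lhs => rw [← hQT]
    rw [Matrix.transpose_apply]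
  have hcQ : ∀ i, Q i i = ∑ j, Q i j ^ 2 := by
    intro i
    have h2 := congrFun (congrFun hQQ i) i
    rw [Matrix.mul_apply] at h2
    rw [← h2]
    refine Finset.sum_congr rfl fun j _ => ?_
    rw [hsym i j, sq]
  have hc0 : ∀ i, 0 ≤ Q i i := by
    intro i
    rw [hcQ i]
    exact Finset.sum_nonneg fun j _ => sq_nonneg _
  have hc1 : ∀ i, Q i i ≤ 1 := by
    intro i
    have h2 : Q i i ^ 2 ≤ Q i i := by
      conv_rhs => rw [hcQ i]
      exact Finset.single_le_sum (fun j _ => sq_nonneg (Q i j)) (Finset.mem_univ i)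
    nlinarith [hc0 i]
  have hsumc : ∑ i, Q i i = ((t : ℕ) : ℝ) := by
    rw [← htrQ]
    rfl
  have htr : (Xᵀ * A * X * W⁻¹).trace = ∑ i, μ i * Q i i := by
    rw [hXAX]
    rw [show Yᵀ * M * Y * W⁻¹ = Yᵀ * (M * (Y * W⁻¹)) from by simp only [Matrix.mul_assoc]]
    rw [Matrix.trace_mul_comm]
    rw [show M * (Y * W⁻¹) * Yᵀ = M * P from by rw [hPdef]; simp only [Matrix.mul_assoc]]
    rw [hspec]
    rw [show U * Matrix.diagonal μ * star U * P
        = U * (Matrix.diagonal μ * (star U * P)) from by simp only [Matrix.mul_assoc]]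
    rw [Matrix.trace_mul_comm]
    rw [show Matrix.diagonal μ * (star U * P) * U = Matrix.diagonal μ * Q from by
      rw [hQdef]; simp only [Matrix.mul_assoc]]
    rw [my_trace_diag]
  rw [htr]
  exact my_key lam μ (fun i => Q i i) hlam hlam0 htd hms.symm hc0 hc1 hsumc
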